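/- Fix λ₁ > 0 and τ₁,…,τ_K > 0 and set λ_{2,k} = τ_k·λ₁. Suppose (μ̂, γ̂₁,…,γ̂_K) ∈ (ℝ^p)^{K+1} minimizes the criterion F(μ, γ₁,…,γ_K) = Σ_{k=1}^K ‖y^{(k)} − X^{(k)}(μ + γ_k)‖₂²/(2n) + λ₁‖μ‖₁ + Σ_{k=1}^K λ_{2,k}‖γ_k‖₁. Set β̂_k = μ̂ + γ̂_k for each k. Then for every j ∈ [p], μ̂_j is a minimizer over b ∈ ℝ of the function b ↦ |b| + Σ_{k=1}^K τ_k·|β̂_{k,j} − b|; that is, μ̂_j ∈ WSmedian(β̂_{1,j},…,β̂_{K,j}; τ). -/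

import Mathlib

open scoped BigOperators Matrix
open Classical MeasureTheory ProbabilityTheory

noncomputable section

/-- The ℓ₁ norm of a finitely supported real vector. -/
def l1 {ι : Type*} [Fintype ι] (x : ι → ℝ) : ℝ := ∑ i, |x i|

/-- The squared ℓ₂ norm. -/
def l2sq {ι : Type*} [Fintype ι] (x : ι → ℝ) : ℝ := ∑ i, (x i) ^ 2

/-- The ℓ₂ norm. -/
def l2 {ι : Type*} [Fintype ι] (x : ι → ℝ) : ℝ := Real.sqrt (l2sq x)

/-- The ℓ∞ norm. -/
def linf {ι : Type*} (x : ι → ℝ) : ℝ := sSup (Set.range fun i => |x i|)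

/-- Smallest eigenvalue (= smallest singular value, for the symmetric PSD
matrices considered here). -/
def lamMin {ι : Type*} [Fintype ι] (M : Matrix ι ι ℝ) : ℝ :=
  sInf {r : ℝ | ∃ x : ι → ℝ, x ≠ 0 ∧ M.mulVec x = r • x}

/-- Gram matrix of the columns of `M` indexed by the support of `θ`. -/
def gramOn {ι κ : Type*} [Fintype ι] (M : Matrix ι κ ℝ) (θ : κ → ℝ) :
    Matrix {c // θ c ≠ 0} {c // θ c ≠ 0} ℝ :=
  fun a b => ∑ r, M r a.val * M r b.val

/-- ‖(M_J^T M_J)⁻¹ M_J^T M_j‖₁ for a column index `j` (J = support of θ). -/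
def icVal {ι κ : Type*} [Fintype ι] [Fintype κ] [DecidableEq κ]
    (M : Matrix ι κ ℝ) (θ : κ → ℝ) (j : κ) : ℝ :=
  l1 ((gramOn M θ)⁻¹.mulVec fun a : {c // θ c ≠ 0} => ∑ r, M r a.val * M r j)

/-- max over j outside the support of θ of `icVal`. -/
def icSup {ι κ : Type*} [Fintype ι] [Fintype κ] [DecidableEq κ]
    (M : Matrix ι κ ℝ) (θ : κ → ℝ) : ℝ :=
  sSup {x : ℝ | ∃ j, θ j = 0 ∧ x = icVal M θ j}

/-- The design matrix 𝒳₀ of the overparametrized (proposed) approach. -/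
def X0 {K p : ℕ} (nk : Fin K → ℕ) (X : (k : Fin K) → Matrix (Fin (nk k)) (Fin p) ℝ)
    (τ : Fin K → ℝ) : Matrix ((k : Fin K) × Fin (nk k)) (Fin p ⊕ Fin K × Fin p) ℝ :=
  fun r c => Sum.elim (fun j => X r.1 r.2 j)
    (fun q => if r.1 = q.1 then X r.1 r.2 q.2 / τ q.1 else 0) c

/-- The parameter vector θ*₀ = (β̄*ᵀ, τ₁(β*₁-β̄*)ᵀ, …, τ_K(β*_K-β̄*)ᵀ)ᵀ. -/
def theta0 {K p : ℕ} (β : Fin K → Fin p → ℝ) (βbar : Fin p → ℝ) (τ : Fin K → ℝ) :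
    (Fin p ⊕ Fin K × Fin p) → ℝ :=
  Sum.elim βbar fun q => τ q.1 * (β q.1 q.2 - βbar q.2)

/-- The design matrix 𝒳_ℓ of the basic approach with reference strata ℓ. -/
def Xl {K p : ℕ} (nk : Fin K → ℕ) (X : (k : Fin K) → Matrix (Fin (nk k)) (Fin p) ℝ)
    (τ : Fin K → ℝ) (ℓ : Fin p → Fin K) :
    Matrix ((k : Fin K) × Fin (nk k)) (Fin p ⊕ {q : Fin K × Fin p // ℓ q.2 ≠ q.1}) ℝ :=
  fun r c => Sum.elim (fun j => X r.1 r.2 j)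
    (fun q => if r.1 = q.val.1 then X r.1 r.2 q.val.2 / τ q.val.1 else 0) c

/-- The parameter vector θ*_ℓ of the basic approach with reference strata ℓ. -/
def thetal {K p : ℕ} (β : Fin K → Fin p → ℝ) (τ : Fin K → ℝ) (ℓ : Fin p → Fin K) :
    (Fin p ⊕ {q : Fin K × Fin p // ℓ q.2 ≠ q.1}) → ℝ :=
  Sum.elim (fun j => β (ℓ j) j)
    fun q => τ q.val.1 * (β q.val.1 q.val.2 - β (ℓ q.val.2) q.val.2)

/-- Multiplicity of the value `v` in the collection (0, β_{1,j}, …, β_{K,j}). -/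
def modeCount {K p : ℕ} (β : Fin K → Fin p → ℝ) (j : Fin p) (v : ℝ) : ℕ :=
  (if v = 0 then 1 else 0) + Nat.card {k : Fin K // β k j = v}

/-- `βbar j` is the unique mode of (0, β_{1,j}, …, β_{K,j}) for every j. -/
def IsUniqueMode {K p : ℕ} (β : Fin K → Fin p → ℝ) (βbar : Fin p → ℝ) : Prop :=
  ∀ j v, v ≠ βbar j → modeCount β j v < modeCount β j (βbar j)

/-- Lasso objective (1/(2n))‖Y − Mθ‖₂² + λ₁‖θ‖₁. -/
def lassoObj {ι κ : Type*} [Fintype ι] [Fintype κ] (n : ℕ) (M : Matrix ι κ ℝ)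
    (Y : ι → ℝ) (lam1 : ℝ) (θ : κ → ℝ) : ℝ :=
  (1 / (2 * (n : ℝ))) * l2sq (fun r => Y r - M.mulVec θ r) + lam1 * l1 θ



lemma l1_update_aux {ι : Type*} [Fintype ι] [DecidableEq ι] (f : ι → ℝ) (j : ι) (v : ℝ) :
    l1 (Function.update f j v) = |v| + ∑ i ∈ Finset.univ.erase j, |f i| := by
  unfold l1
  have h : (fun i => |Function.update f j v i|) = Function.update (fun i => |f i|) j |v| := by
    funext i
    rcases eq_or_ne i j with h | h
    · subst h; simp
    · rw [Function.update_of_ne h, Function.update_of_ne h]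
  calc (∑ i, |Function.update f j v i|) = ∑ i, Function.update (fun i => |f i|) j |v| i := by
        rw [h]
    _ = |v| + ∑ i ∈ Finset.univ.erase j, |f i| := by
        rw [Finset.sum_update_of_mem (Finset.mem_univ j), Finset.sdiff_singleton_eq_erase]

lemma l1_split {ι : Type*} [Fintype ι] [DecidableEq ι] (f : ι → ℝ) (j : ι) :
    l1 f = |f j| + ∑ i ∈ Finset.univ.erase j, |f i| := by
  unfold l1
  rw [← Finset.add_sum_erase _ _ (Finset.mem_univ j)]

/-- at any minimizer of the proposed criterion, the overall
effect μ̂_j is a shrunk τ-weighted median of (β̂_{1,j}, …, β̂_{K,j}). -/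
theorem statement_14 {K p : ℕ} (nk : Fin K → ℕ) (n : ℕ) (hn : n = ∑ k, nk k)
    (X : (k : Fin K) → Matrix (Fin (nk k)) (Fin p) ℝ)
    (y : (k : Fin K) → Fin (nk k) → ℝ)
    (τ : Fin K → ℝ) (hτ : ∀ k, 0 < τ k)
    (lam1 : ℝ) (hlam1 : 0 < lam1)
    (lam2 : Fin K → ℝ) (hlam2 : ∀ k, lam2 k = τ k * lam1)
    (μh : Fin p → ℝ) (γh : Fin K → Fin p → ℝ)
    (hmin : ∀ (μ' : Fin p → ℝ) (γ' : Fin K → Fin p → ℝ),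
      (∑ k, l2sq (fun i => y k i - (X k).mulVec (μh + γh k) i) / (2 * (n : ℝ))
          + lam1 * l1 μh + ∑ k, lam2 k * l1 (γh k))
        ≤ (∑ k, l2sq (fun i => y k i - (X k).mulVec (μ' + γ' k) i) / (2 * (n : ℝ))
          + lam1 * l1 μ' + ∑ k, lam2 k * l1 (γ' k))) :
    ∀ j : Fin p, ∀ b : ℝ,
      |μh j| + ∑ k, τ k * |(μh j + γh k j) - μh j|
        ≤ |b| + ∑ k, τ k * |(μh j + γh k j) - b| := by

  intro j b
  set c := b - μh j with hc
  set μ' : Fin p → ℝ := Function.update μh j b with hμ'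
  set γ' : Fin K → Fin p → ℝ := fun k => Function.update (γh k) j (γh k j - c) with hγ'
  have hsum : ∀ k, μ' + γ' k = μh + γh k := by
    intro k; funext i
    by_cases h : i = j
    · subst h; simp [hμ', hγ', hc]; ring
    · simp [hμ', hγ', Function.update_of_ne h]
  have key := hmin μ' γ'
  simp only [hsum] at key
  have key2 : lam1 * l1 μh + ∑ k, lam2 k * l1 (γh k)
      ≤ lam1 * l1 μ' + ∑ k, lam2 k * l1 (γ' k) := by linarith
  have hμ1 : l1 μ' = |b| + ∑ i ∈ Finset.univ.erase j, |μh i| := l1_update_aux μh j b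
  have hμ2 : l1 μh = |μh j| + ∑ i ∈ Finset.univ.erase j, |μh i| := l1_split μh j
  have hγ1 : ∀ k, l1 (γ' k) = |γh k j - c| + ∑ i ∈ Finset.univ.erase j, |γh k i| :=
    fun k => l1_update_aux (γh k) j (γh k j - c)
  have hγ2 : ∀ k, l1 (γh k) = |γh k j| + ∑ i ∈ Finset.univ.erase j, |γh k i| :=
    fun k => l1_split (γh k) j
  simp only [hμ1, hμ2, hγ1, hγ2, hlam2, mul_add, Finset.sum_add_distrib] at key2
  have key3 : lam1 * |μh j| + ∑ k, τ k * lam1 * |γh k j|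
      ≤ lam1 * |b| + ∑ k, τ k * lam1 * |γh k j - c| := by linarith
  have hgoal : lam1 * (|μh j| + ∑ k, τ k * |γh k j|)
      ≤ lam1 * (|b| + ∑ k, τ k * |γh k j - c|) := by
    rw [mul_add, mul_add, Finset.mul_sum, Finset.mul_sum]
    have e : ∀ k ∈ (Finset.univ : Finset (Fin K)), lam1 * (τ k * |γh k j|) = τ k * lam1 * |γh k j| := by
      intro k _; ring
    have e2 : ∀ k ∈ (Finset.univ : Finset (Fin K)), lam1 * (τ k * |γh k j - c|) = τ k * lam1 * |γh k j - c| := by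
      intro k _; ring
    rw [Finset.sum_congr rfl e, Finset.sum_congr rfl e2]; linarith
  have hfin := (mul_le_mul_iff_right₀ hlam1).mp hgoal
  have hrw : ∀ k, (μh j + γh k j) - μh j = γh k j := by intro k; ring
  have hrw2 : ∀ k, (μh j + γh k j) - b = γh k j - c := by intro k; rw [hc]; ring
  simp only [hrw, hrw2]
  exact hfin


end
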